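/- Let σ : ℝ → ℝ be slope-restricted on [0,1]. Let W ∈ ℝ^{c×c₋}, b ∈ ℝ^c, let X₋ ∈ ℝ^{c₋×c₋} and X ∈ ℝ^{c×c} be symmetric positive definite, and let Λ ∈ ℝ^{c×c} be diagonal with positive diagonal entries. If the block matrix [[X₋, −Wᵀ Λ], [−Λ W, 2Λ − X]] is positive semidefinite, then the layer u ↦ σ(W u + b) satisfies (σ(W u^a + b) − σ(W u^b + b))ᵀ X (σ(W u^a + b) − σ(W u^b + b)) ≤ (u^a − u^b)ᵀ X₋ (u^a − u^b) for all u^a, u^b ∈ ℝ^{c₋}. -/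

import Mathlib

open Matrix

/-- The LMI `[[X₋, −Wᵀ Λ], [−Λ W, 2Λ − X]] ⪰ 0` certifies incremental
dissipativity of the fully-connected layer `u ↦ σ(W u + b)` with supply given by
the input weight `X₋` and output weight `X`. -/
theorem fc_layer_LMI_implies_incremental_dissipativity
    (cm c : ℕ) (σ : ℝ → ℝ)
    (hσ : ∀ a b : ℝ, 0 ≤ (σ a - σ b) * ((a - b) - (σ a - σ b)))
    (W : Matrix (Fin c) (Fin cm) ℝ) (b : Fin c → ℝ)
    (Xm : Matrix (Fin cm) (Fin cm) ℝ) (hXm : Xm.PosDef)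
    (X : Matrix (Fin c) (Fin c) ℝ) (hX : X.PosDef)
    (d : Fin c → ℝ) (hd : ∀ i, 0 < d i)
    (hLMI : (Matrix.fromBlocks Xm (-(Wᵀ * Matrix.diagonal d))
      (-(Matrix.diagonal d * W)) ((2 : ℝ) • Matrix.diagonal d - X)).PosSemidef)
    (ua ub : Fin cm → ℝ) :
    ((fun i => σ ((W *ᵥ ua + b) i)) - fun i => σ ((W *ᵥ ub + b) i)) ⬝ᵥ
        X *ᵥ ((fun i => σ ((W *ᵥ ua + b) i)) - fun i => σ ((W *ᵥ ub + b) i)) ≤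
      (ua - ub) ⬝ᵥ Xm *ᵥ (ua - ub) := by
  set u : Fin cm → ℝ := ua - ub with hu
  set y : Fin c → ℝ := ((fun i => σ ((W *ᵥ ua + b) i)) - fun i => σ ((W *ᵥ ub + b) i)) with hy
  have hq := hLMI.dotProduct_mulVec_nonneg (Sum.elim u y)
  have hWu : ∀ i, (W *ᵥ u) i = (W *ᵥ ua + b) i - (W *ᵥ ub + b) i := by
    intro i
    simp [hu, Matrix.mulVec_sub]
  have hS : 0 ≤ y ⬝ᵥ (Matrix.diagonal d) *ᵥ (W *ᵥ u - y) := by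
    rw [dotProduct]
    apply Finset.sum_nonneg
    intro i _
    rw [Matrix.mulVec_diagonal]
    have := hσ ((W *ᵥ ua + b) i) ((W *ᵥ ub + b) i)
    have h2 : y i = σ ((W *ᵥ ua + b) i) - σ ((W *ᵥ ub + b) i) := by simp [hy]
    have h3 := hWu i
    have h4 : (W *ᵥ u - y) i = (W *ᵥ u) i - y i := by simp
    rw [h4, h2, h3]
    nlinarith [hd i, this]
  have key : Sum.elim u y ⬝ᵥ (Matrix.fromBlocks Xm (-(Wᵀ * Matrix.diagonal d))
      (-(Matrix.diagonal d * W)) ((2 : ℝ) • Matrix.diagonal d - X)) *ᵥ Sum.elim u y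
      = u ⬝ᵥ Xm *ᵥ u - y ⬝ᵥ X *ᵥ y - 2 * (y ⬝ᵥ (Matrix.diagonal d) *ᵥ (W *ᵥ u - y)) := by
    have hsymm : u ⬝ᵥ (Wᵀ * Matrix.diagonal d) *ᵥ y = y ⬝ᵥ (Matrix.diagonal d * W) *ᵥ u := by
      rw [← Matrix.mulVec_mulVec, ← Matrix.mulVec_mulVec]
      rw [Matrix.dotProduct_mulVec u, Matrix.vecMul_transpose]
      simp [dotProduct, Matrix.mulVec_diagonal]
      exact Finset.sum_congr rfl fun i _ => by ring
    rw [Matrix.fromBlocks_mulVec, sumElim_dotProduct_sumElim]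
    simp only [Matrix.neg_mulVec, Matrix.sub_mulVec, Matrix.smul_mulVec,
      dotProduct_add, dotProduct_neg, dotProduct_sub, dotProduct_smul,
      Matrix.mulVec_sub, Sum.elim_comp_inl, Sum.elim_comp_inr]
    rw [hsymm]
    have : y ⬝ᵥ (Matrix.diagonal d * W) *ᵥ u = y ⬝ᵥ (Matrix.diagonal d) *ᵥ (W *ᵥ u) := by
      rw [← Matrix.mulVec_mulVec]
    rw [this]
    simp only [smul_eq_mul]
    ring
  simp only [star_trivial] at hq
  rw [key] at hq
  linarith
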